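/- Let n be a natural number and let A be an invertible n × n integer matrix with A·A = 1 (an element of order at most 2 in GL_n(ℤ)). Then there exist natural numbers n₀, n₁, n₂ with n₀ + n₁ + 2·n₂ = n and an invertible integer matrix P ∈ GL_n(ℤ) such that P·A·P⁻¹ equals the block diagonal matrix diag(I_{n₀}, −I_{n₁}, J, …, J) consisting of an n₀ × n₀ identity block, an n₁ × n₁ block −I, and n₂ copies of the 2 × 2 block J = [[0,1],[1,0]]. -/

import Mathlib

open Matrix Finset

/-- The block diagonal `n × n` integer matrix `D(n₀,n₁,n₂) = diag(I_{n₀}, −I_{n₁}, J, …, J)`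
(with `n₂` copies of `J = [[0,1],[1,0]]`), meant for `n₀ + n₁ + 2·n₂ = n`. -/
def blockD (n n₀ n₁ n₂ : ℕ) : Matrix (Fin n) (Fin n) ℤ :=
  Matrix.of fun i j =>
    if (i : ℕ) < n₀ then (if (j : ℕ) = (i : ℕ) then 1 else 0)
    else if (i : ℕ) < n₀ + n₁ then (if (j : ℕ) = (i : ℕ) then -1 else 0)
    else if ((i : ℕ) - (n₀ + n₁)) % 2 = 0 then (if (j : ℕ) = (i : ℕ) + 1 then 1 else 0)
    else (if (j : ℕ) = (i : ℕ) - 1 then 1 else 0)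




/-- extend a `p × p` matrix to `(p+1) × (p+1)` with a `1` in the corner. -/
def emb1 {p : ℕ} (M : Matrix (Fin p) (Fin p) ℤ) : Matrix (Fin (p+1)) (Fin (p+1)) ℤ :=
  Matrix.of fun i j =>
    if hi : i = 0 then (if j = 0 then 1 else 0)
    else if hj : j = 0 then 0 else M (i.pred hi) (j.pred hj)

lemma emb1_zero_zero {p} (M : Matrix (Fin p) (Fin p) ℤ) : emb1 M 0 0 = 1 := by simp [emb1]
lemma emb1_zero_succ {p} (M : Matrix (Fin p) (Fin p) ℤ) (j : Fin p) :
    emb1 M 0 j.succ = 0 := by simp [emb1, (Fin.succ_ne_zero j)]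
lemma emb1_succ_zero {p} (M : Matrix (Fin p) (Fin p) ℤ) (i : Fin p) :
    emb1 M i.succ 0 = 0 := by simp [emb1, (Fin.succ_ne_zero i)]
lemma emb1_succ_succ {p} (M : Matrix (Fin p) (Fin p) ℤ) (i j : Fin p) :
    emb1 M i.succ j.succ = M i j := by
  simp [emb1, (Fin.succ_ne_zero i), (Fin.succ_ne_zero j)]

lemma emb1_mul_left {p q} (M : Matrix (Fin p) (Fin p) ℤ) (C : Matrix (Fin (p+1)) (Fin (q+1)) ℤ) :
    (∀ j, (emb1 M * C) 0 j = C 0 j) ∧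
    (∀ (i : Fin p) (j), (emb1 M * C) i.succ j = ∑ k, M i k * C k.succ j) := by
  constructor
  · intro j
    rw [Matrix.mul_apply, Fin.sum_univ_succ]
    simp [emb1_zero_zero, emb1_zero_succ]
  · intro i j
    rw [Matrix.mul_apply, Fin.sum_univ_succ]
    simp [emb1_succ_zero, emb1_succ_succ]

lemma emb1_mul_right {p q} (C : Matrix (Fin (p+1)) (Fin (q+1)) ℤ) (W : Matrix (Fin q) (Fin q) ℤ) :
    (∀ i, (C * emb1 W) i 0 = C i 0) ∧
    (∀ (i) (j : Fin q), (C * emb1 W) i j.succ = ∑ l, C i l.succ * W l j) := by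
  constructor
  · intro i
    rw [Matrix.mul_apply, Fin.sum_univ_succ]
    simp [emb1_zero_zero, emb1_succ_zero]
  · intro i j
    rw [Matrix.mul_apply, Fin.sum_univ_succ]
    simp [emb1_zero_succ, emb1_succ_succ]

lemma emb1_mul {p} (M M' : Matrix (Fin p) (Fin p) ℤ) :
    emb1 M * emb1 M' = emb1 (M * M') := by
  ext i j
  induction i using Fin.cases with
  | zero =>
    rw [(emb1_mul_left M (emb1 M')).1]
    induction j using Fin.cases with
    | zero => rw [emb1_zero_zero, emb1_zero_zero]
    | succ j => rw [emb1_zero_succ, emb1_zero_succ]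
  | succ i =>
    induction j using Fin.cases with
    | zero =>
      rw [show ((0:Fin (p+1))) = (0:Fin (p+1)) from rfl]
      rw [Matrix.mul_apply, Fin.sum_univ_succ]
      simp [emb1_succ_zero, emb1_zero_zero, emb1_succ_succ]
    | succ j =>
      rw [(emb1_mul_left M (emb1 M')).2, emb1_succ_succ, Matrix.mul_apply]
      exact Finset.sum_congr rfl fun k _ => by rw [emb1_succ_succ]

lemma emb1_one {p} : emb1 (1 : Matrix (Fin p) (Fin p) ℤ) = 1 := by
  ext i j
  induction i using Fin.cases with
  | zero =>
    induction j using Fin.cases with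
    | zero => simp [emb1_zero_zero]
    | succ j => simp [emb1_zero_succ, Matrix.one_apply, (Fin.succ_ne_zero j).symm]
  | succ i =>
    induction j using Fin.cases with
    | zero => simp [emb1_succ_zero, Matrix.one_apply, Fin.succ_ne_zero i]
    | succ j => simp [emb1_succ_succ, Matrix.one_apply, Fin.succ_inj]

def permL {p : ℕ} (σ : Equiv.Perm (Fin p)) : Matrix (Fin p) (Fin p) ℤ :=
  Matrix.of fun i j => if j = σ i then 1 else 0
def permR {q : ℕ} (τ : Equiv.Perm (Fin q)) : Matrix (Fin q) (Fin q) ℤ :=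
  Matrix.of fun i j => if i = τ j then 1 else 0

lemma permL_mul {p q : ℕ} (σ : Equiv.Perm (Fin p)) (B : Matrix (Fin p) (Fin q) ℤ) :
    permL σ * B = B.submatrix σ id := by
  ext i j
  rw [Matrix.mul_apply]
  simp [permL, ite_mul]

lemma mul_permR {p q : ℕ} (τ : Equiv.Perm (Fin q)) (B : Matrix (Fin p) (Fin q) ℤ) :
    B * permR τ = B.submatrix id τ := by
  ext i j
  rw [Matrix.mul_apply]
  simp [permR, mul_ite]

lemma permL_inv {p : ℕ} (σ : Equiv.Perm (Fin p)) :
    permL σ * permL σ.symm = 1 ∧ permL σ.symm * permL σ = 1 := by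
  constructor
  · rw [permL_mul]; ext i j
    simp [permL, Matrix.one_apply, Equiv.symm_apply_eq, eq_comm]
  · rw [permL_mul]; ext i j
    simp [permL, Matrix.one_apply, eq_comm, Equiv.eq_symm_apply]

lemma permR_inv {q : ℕ} (τ : Equiv.Perm (Fin q)) :
    permR τ * permR τ.symm = 1 ∧ permR τ.symm * permR τ = 1 := by
  constructor
  · rw [mul_permR]; ext i j
    simp [permR, Matrix.one_apply, Equiv.eq_symm_apply]
  · rw [mul_permR]; ext i j
    simp [permR, Matrix.one_apply, Equiv.symm_apply_eq]

lemma unip_inv {s : ℕ} (Nm : Matrix (Fin s) (Fin s) ℤ) (h : Nm * Nm = 0) :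
    (1 + Nm) * (1 - Nm) = 1 ∧ (1 - Nm) * (1 + Nm) = 1 := by
  constructor
  · rw [mul_sub, mul_one, add_mul, one_mul, h, add_zero, add_sub_cancel_right]
  · rw [sub_mul, one_mul, mul_add, mul_one, h, add_zero, add_sub_cancel_right]

lemma red_aux (N : ℕ) : ∀ p q : ℕ, p + q ≤ N → ∀ B : Matrix (Fin p) (Fin q) ℤ,
    ∃ (U Ui : Matrix (Fin p) (Fin p) ℤ) (V Vi : Matrix (Fin q) (Fin q) ℤ) (r : ℕ),
      U * Ui = 1 ∧ Ui * U = 1 ∧ V * Vi = 1 ∧ Vi * V = 1 ∧ r ≤ p ∧ r ≤ q ∧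
      ∀ i j, (U * B * V) i j % 2 = if (i : ℕ) = (j : ℕ) ∧ (i : ℕ) < r then 1 else 0 := by
  induction N with
  | zero =>
    intro p q h B
    refine ⟨1, 1, 1, 1, 0, one_mul 1, one_mul 1, one_mul 1, one_mul 1,
      Nat.zero_le _, Nat.zero_le _, fun i j => absurd i.pos (by omega)⟩
  | succ N ih =>
    intro p q hpq B
    by_cases hall : ∀ i j, B i j % 2 = 0
    · refine ⟨1, 1, 1, 1, 0, one_mul 1, one_mul 1, one_mul 1, one_mul 1,
        Nat.zero_le _, Nat.zero_le _, fun i j => ?_⟩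
      rw [Matrix.one_mul, Matrix.mul_one]
      simp [hall i j]
    · push_neg at hall
      obtain ⟨i₀, j₀, hodd⟩ := hall
      obtain ⟨p', rfl⟩ : ∃ p', p = p' + 1 := ⟨p - 1, by have := i₀.pos; omega⟩
      obtain ⟨q', rfl⟩ : ∃ q', q = q' + 1 := ⟨q - 1, by have := j₀.pos; omega⟩
      set σ := Equiv.swap (0 : Fin (p' + 1)) i₀ with hσ
      set τ := Equiv.swap (0 : Fin (q' + 1)) j₀ with hτ
      set B₁ := B.submatrix σ τ with hB₁
      have hB₁00 : B₁ 0 0 % 2 = 1 := by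
        have h00 : B₁ 0 0 = B i₀ j₀ := by
          simp [hB₁, hσ, hτ, Equiv.swap_apply_left]
        rw [h00]; omega
      set NL : Matrix (Fin (p' + 1)) (Fin (p' + 1)) ℤ :=
        Matrix.of (fun i j => if j = 0 ∧ i ≠ 0 then -(B₁ i 0) else 0) with hNL
      set NR : Matrix (Fin (q' + 1)) (Fin (q' + 1)) ℤ :=
        Matrix.of (fun i j => if i = 0 ∧ j ≠ 0 then -(B₁ 0 j) else 0) with hNR
      have hNL2 : NL * NL = 0 := by
        ext i j
        rw [Matrix.mul_apply, Matrix.zero_apply]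
        refine Finset.sum_eq_zero fun k _ => ?_
        by_cases hk : k = 0
        · subst hk
          have h0 : NL 0 j = 0 := by simp [hNL]
          rw [h0, mul_zero]
        · have h0 : NL i k = 0 := by simp [hNL, hk]
          rw [h0, zero_mul]
      have hNR2 : NR * NR = 0 := by
        ext i j
        rw [Matrix.mul_apply, Matrix.zero_apply]
        refine Finset.sum_eq_zero fun k _ => ?_
        by_cases hk : k = 0
        · subst hk
          have h0 : NR i 0 = 0 := by simp [hNR]
          rw [h0, zero_mul]
        · have h0 : NR k j = 0 := by simp [hNR, hk]
          rw [h0, mul_zero]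
      set L := 1 + NL with hL
      set R := 1 + NR with hR
      set C := L * B₁ * R with hC
      -- entrywise formula for C
      have hCe : ∀ i j, C i j =
          B₁ i j + NL i 0 * B₁ 0 j + (B₁ i 0 + NL i 0 * B₁ 0 0) * NR 0 j := by
        intro i j
        have hLB : ∀ i j, (L * B₁) i j = B₁ i j + NL i 0 * B₁ 0 j := by
          intro i j
          rw [hL, Matrix.add_mul, Matrix.one_mul, Matrix.add_apply, Matrix.mul_apply]
          congr 1
          rw [Fin.sum_univ_succ]
          have : ∀ k : Fin p', NL i k.succ = 0 := fun k => by
            simp [hNL, (Fin.succ_ne_zero k)]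
          simp [this]
        have hMR : ∀ (M : Matrix (Fin (p' + 1)) (Fin (q' + 1)) ℤ) i j,
            (M * R) i j = M i j + M i 0 * NR 0 j := by
          intro M i j
          rw [hR, Matrix.mul_add, Matrix.mul_one, Matrix.add_apply, Matrix.mul_apply]
          congr 1
          rw [Fin.sum_univ_succ]
          have : ∀ k : Fin q', NR k.succ j = 0 := fun k => by
            simp [hNR, (Fin.succ_ne_zero k)]
          simp [this]
        rw [hC, hMR, hLB, hLB]
      have hC00 : C 0 0 % 2 = 1 := by
        have h1 : NL 0 0 = 0 := by simp [hNL]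
        have h2 : NR 0 0 = 0 := by simp [hNR]
        rw [hCe 0 0, h1, h2]
        simpa using hB₁00
      have hCcol : ∀ i : Fin p', C i.succ 0 % 2 = 0 := by
        intro i
        have h1 : NL i.succ 0 = -(B₁ i.succ 0) := by simp [hNL, Fin.succ_ne_zero i]
        have h2 : NR 0 0 = 0 := by simp [hNR]
        rw [hCe, h1, h2, mul_zero, add_zero]
        have : B₁ i.succ 0 + -B₁ i.succ 0 * B₁ 0 0 = B₁ i.succ 0 * (1 - B₁ 0 0) := by ring
        rw [this]
        obtain ⟨c, hc⟩ : (2 : ℤ) ∣ (1 - B₁ 0 0) := by omega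
        rw [hc, show B₁ i.succ 0 * (2 * c) = 2 * (B₁ i.succ 0 * c) by ring]
        omega
      have hCrow : ∀ j : Fin q', C 0 j.succ % 2 = 0 := by
        intro j
        have h1 : NL 0 0 = 0 := by simp [hNL]
        have h2 : NR 0 j.succ = -(B₁ 0 j.succ) := by simp [hNR, Fin.succ_ne_zero j]
        rw [hCe, h1, h2, zero_mul, add_zero, zero_mul, add_zero]
        have : B₁ 0 j.succ + B₁ 0 0 * -B₁ 0 j.succ = B₁ 0 j.succ * (1 - B₁ 0 0) := by ring
        rw [this]
        obtain ⟨c, hc⟩ : (2 : ℤ) ∣ (1 - B₁ 0 0) := by omega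
        rw [hc, show B₁ 0 j.succ * (2 * c) = 2 * (B₁ 0 j.succ * c) by ring]
        omega
      -- the inner matrix
      set B' : Matrix (Fin p') (Fin q') ℤ := Matrix.of (fun i j => C i.succ j.succ) with hB'
      obtain ⟨U', Ui', V', Vi', r', hU1, hU2, hV1, hV2, hrp, hrq, hent⟩ :=
        ih p' q' (by omega) B'
      -- assemble
      refine ⟨emb1 U' * (L * permL σ), (permL σ.symm * (1 - NL)) * emb1 Ui',
        (permR τ * R) * emb1 V', emb1 Vi' * ((1 - NR) * permR τ.symm), r' + 1,
        ?_, ?_, ?_, ?_, by omega, by omega, ?_⟩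
      · simp only [mul_assoc]
        rw [← mul_assoc (permL σ) (permL σ.symm), (permL_inv σ).1, Matrix.one_mul,
          ← mul_assoc L (1 - NL), hL, (unip_inv NL hNL2).1, Matrix.one_mul,
          emb1_mul, hU1, emb1_one]
      · simp only [mul_assoc]
        rw [← mul_assoc (emb1 Ui') (emb1 U'), emb1_mul, hU2, emb1_one, Matrix.one_mul,
          ← mul_assoc (1 - NL) L, hL, (unip_inv NL hNL2).2, Matrix.one_mul,
          (permL_inv σ).2]
      · simp only [mul_assoc]
        rw [← mul_assoc (emb1 V') (emb1 Vi'), emb1_mul, hV1, emb1_one, Matrix.one_mul,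
          ← mul_assoc R (1 - NR), hR, (unip_inv NR hNR2).1, Matrix.one_mul,
          (permR_inv τ).1]
      · simp only [mul_assoc]
        rw [← mul_assoc (permR τ.symm) (permR τ), (permR_inv τ).2, Matrix.one_mul,
          ← mul_assoc (1 - NR) R, hR, (unip_inv NR hNR2).2, Matrix.one_mul,
          emb1_mul, hV2, emb1_one]
      · -- entry computation
        intro i j
        have hG : emb1 U' * (L * permL σ) * B * (permR τ * R * emb1 V') =
            emb1 U' * C * emb1 V' := by
          have h1 : permL σ * B * permR τ = B₁ := by
            rw [permL_mul, mul_permR, Matrix.submatrix_submatrix, hB₁]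
            rfl
          rw [hC, ← h1]
          simp only [Matrix.mul_assoc]
        rw [hG]
        induction i using Fin.cases with
        | zero =>
          induction j using Fin.cases with
          | zero =>
            rw [(emb1_mul_right (emb1 U' * C) V').1, (emb1_mul_left U' C).1]
            simpa using hC00
          | succ j =>
            rw [(emb1_mul_right (emb1 U' * C) V').2]
            have heven : (2:ℤ) ∣ ∑ l, (emb1 U' * C) 0 l.succ * V' l j := by
              refine Finset.dvd_sum fun l _ => ?_
              rw [(emb1_mul_left U' C).1]
              exact Dvd.dvd.mul_right (by have := hCrow l; omega) _
            have hne : ¬((0:ℕ) = ((j.succ : Fin (q'+1)) : ℕ)) := by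
              simp [Fin.val_succ]
            rw [if_neg (fun hcon => hne hcon.1)]
            omega
        | succ i =>
          induction j using Fin.cases with
          | zero =>
            rw [(emb1_mul_right (emb1 U' * C) V').1, (emb1_mul_left U' C).2]
            have heven : (2:ℤ) ∣ ∑ k, U' i k * C k.succ 0 := by
              refine Finset.dvd_sum fun k _ => ?_
              exact Dvd.dvd.mul_left (by have := hCcol k; omega) _
            have hne : ¬(((i.succ : Fin (p'+1)) : ℕ) = (0:ℕ)) := by
              simp [Fin.val_succ]
            rw [if_neg (fun hcon => hne hcon.1)]
            omega
          | succ j =>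
            rw [(emb1_mul_right (emb1 U' * C) V').2]
            have hsum : ∑ l, (emb1 U' * C) i.succ l.succ * V' l j = (U' * B' * V') i j := by
              rw [Matrix.mul_apply]
              refine Finset.sum_congr rfl fun l _ => ?_
              rw [(emb1_mul_left U' C).2, Matrix.mul_apply]
              congr 1
            rw [hsum, hent i j]
            have hiff : ((i.succ : Fin (p'+1)) : ℕ) = ((j.succ : Fin (q'+1)) : ℕ) ∧
                ((i.succ : Fin (p'+1)) : ℕ) < r' + 1 ↔ (i : ℕ) = (j : ℕ) ∧ (i : ℕ) < r' := by
              simp only [Fin.val_succ]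
              omega
            rw [if_congr hiff rfl rfl]

lemma stepA (n : ℕ) (φ : (Fin n → ℤ) →ₗ[ℤ] (Fin n → ℤ)) (hφ : ∀ x, φ (φ x) = x) :
    ∃ (m k : ℕ), m + k = n ∧
      ∃ (E : Fin m → Fin n → ℤ) (F : Fin k → Fin n → ℤ) (B : Matrix (Fin m) (Fin k) ℤ),
        Submodule.span ℤ (Set.range E ∪ Set.range F) = ⊤ ∧
        (∀ i, φ (E i) = -E i) ∧
        (∀ j, φ (F j) = F j + ∑ i, B i j • E i) := by
  classical
  set Kφ : Submodule ℤ (Fin n → ℤ) := LinearMap.ker (φ + LinearMap.id) with hKφ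
  have hKmem : ∀ x, x ∈ Kφ ↔ φ x = -x := by
    intro x
    rw [hKφ, LinearMap.mem_ker, LinearMap.add_apply, LinearMap.id_apply,
      add_eq_zero_iff_eq_neg]
  obtain ⟨m, bM, bN, f, a, hsnf⟩ := Kφ.smithNormalForm (Pi.basisFun ℤ (Fin n))
  have hmn : m ≤ n := by
    have := Fintype.card_le_of_embedding f
    simpa using this
  set E : Fin m → Fin n → ℤ := fun i => bM (f i) with hE
  have ha : ∀ i, a i ≠ 0 := by
    intro i hai
    have h0 : (bN i : Fin n → ℤ) = 0 := by rw [hsnf i, hai, zero_smul]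
    exact bN.ne_zero i (Subtype.coe_injective h0)
  have hbMf : ∀ i, φ (E i) = -E i := by
    intro i
    have h1 : φ ((bN i : Fin n → ℤ)) = -(bN i : Fin n → ℤ) := (hKmem _).mp (bN i).2
    rw [hsnf i, LinearMap.map_smul] at h1
    have h1' : a i • φ (E i) = -(a i • E i) := h1
    have h2 : a i • (φ (E i) + E i) = 0 := by
      rw [smul_add, h1']
      abel
    have h3 : φ (E i) + E i = 0 := by
      rcases smul_eq_zero.mp h2 with h | h
      · exact absurd h (ha i)
      · exact h
    rw [eq_neg_iff_add_eq_zero]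
    exact h3
  -- K is contained in the span of E
  have hKspan : Kφ ≤ Submodule.span ℤ (Set.range E) := by
    intro x hx
    have hrep := bN.sum_repr ⟨x, hx⟩
    have : x = ∑ i, bN.repr ⟨x, hx⟩ i • ((bN i : Fin n → ℤ)) := by
      have := congrArg (Kφ.subtype) hrep
      rw [map_sum] at this
      simp only [Submodule.subtype_apply, Submodule.coe_smul] at this
      exact this.symm
    rw [this]
    refine Submodule.sum_mem _ fun i _ => ?_
    rw [hsnf i, smul_smul]
    exact Submodule.smul_mem _ _ (Submodule.subset_span ⟨i, rfl⟩)
  -- repr of elements of span E vanishes off range f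
  have hrepr0 : ∀ x ∈ Submodule.span ℤ (Set.range E), ∀ l, l ∉ Set.range f →
      bM.repr x l = 0 := by
    intro x hx
    induction hx using Submodule.span_induction with
    | mem x hxx =>
      obtain ⟨i, rfl⟩ := hxx
      intro l hl
      rw [hE]
      simp only []
      rw [bM.repr_self, Finsupp.single_apply]
      exact if_neg (fun h => hl ⟨i, h⟩)
    | zero => simp
    | add x y _ _ hx hy => intro l hl; rw [map_add]; simp [hx l hl, hy l hl]
    | smul c x _ hx =>
      intro l hl
      rw [LinearEquiv.map_smul]
      simp [hx l hl]
  -- writing elements of span E in terms of E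
  have hsum : ∀ x ∈ Submodule.span ℤ (Set.range E),
      x = ∑ i, bM.repr x (f i) • E i := by
    intro x hx
    have h0 := bM.sum_repr x
    have hv : ∀ l ∈ Finset.univ, l ∉ Finset.univ.image f → bM.repr x l • bM l = 0 := by
      intro l _ hl
      have hlr : l ∉ Set.range f := by
        intro ⟨i, hi⟩
        exact hl (Finset.mem_image.mpr ⟨i, Finset.mem_univ i, hi⟩)
      rw [hrepr0 x hx l hlr, zero_smul]
    have h1 := (Finset.sum_subset (Finset.subset_univ (Finset.univ.image f)) hv).trans h0
    rw [Finset.sum_image (fun i _ j _ h => f.injective h)] at h1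
    exact h1.symm
  -- the complement
  set k := n - m with hk
  have hcard : Fintype.card ↥((Set.range ⇑f)ᶜ) = k := by
    have h1 : Fintype.card ↥(Set.range ⇑f) = m := by
      simpa using Set.card_range_of_injective f.injective
    rw [Fintype.card_compl_set, h1]
    simp [hk]
  set e : Fin k ≃ ↥((Set.range ⇑f)ᶜ) := (Fintype.equivFinOfCardEq hcard).symm with he
  set F : Fin k → Fin n → ℤ := fun j => bM ((e j : Fin n)) with hF
  have hFK : ∀ j, φ (F j) - F j ∈ Kφ := by
    intro j
    rw [hKmem, map_sub, hφ]
    abel_nf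
  set B : Matrix (Fin m) (Fin k) ℤ :=
    Matrix.of (fun i j => bM.repr (φ (F j) - F j) (f i)) with hB
  refine ⟨m, k, by omega, E, F, B, ?_, hbMf, ?_⟩
  · rw [eq_top_iff, ← bM.span_eq]
    rw [Submodule.span_le]
    rintro x ⟨l, rfl⟩
    by_cases hl : l ∈ Set.range ⇑f
    · obtain ⟨i, rfl⟩ := hl
      exact Submodule.subset_span (Or.inl ⟨i, rfl⟩)
    · have hl' : l ∈ (Set.range ⇑f)ᶜ := hl
      have hEq : bM l = F (e.symm ⟨l, hl'⟩) := by
        rw [hF]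
        simp only []
        congr 1
        rw [Equiv.apply_symm_apply]
      rw [hEq]
      exact Submodule.subset_span (Or.inr ⟨_, rfl⟩)
  · intro j
    have hmem := hKspan (hFK j)
    have h4 := hsum _ hmem
    have h5 : φ (F j) = F j + ∑ i, (bM.repr (φ (F j) - F j)) (f i) • E i := by
      rw [← h4]
      abel
    simpa [hB] using h5
lemma combo {n s t : ℕ}
    (M : Matrix (Fin s) (Fin t) ℤ) (G : Fin s → Fin n → ℤ) (c : Fin t → ℤ) :
    ∑ j, c j • (∑ i, M i j • G i) = ∑ i, (∑ j, M i j * c j) • G i := by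
  have h1 : ∀ j, c j • (∑ i, M i j • G i) = ∑ i, (M i j * c j) • G i := by
    intro j
    rw [Finset.smul_sum]
    exact Finset.sum_congr rfl fun i _ => by rw [smul_smul, mul_comm]
  simp_rw [h1]
  rw [Finset.sum_comm]
  exact Finset.sum_congr rfl fun i _ => by rw [Finset.sum_smul]

lemma sum_delta {n s : ℕ}
    (M : Matrix (Fin s) (Fin s) ℤ) (hM : M = 1) (G : Fin s → Fin n → ℤ) (j : Fin s) :
    ∑ i, M i j • G i = G j := by
  subst hM
  simp [Matrix.one_apply, ite_smul]

lemma stepB (n m k : ℕ) (φ : (Fin n → ℤ) →ₗ[ℤ] (Fin n → ℤ))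
    (E : Fin m → Fin n → ℤ) (F : Fin k → Fin n → ℤ) (B : Matrix (Fin m) (Fin k) ℤ)
    (hspan : Submodule.span ℤ (Set.range E ∪ Set.range F) = ⊤)
    (hE : ∀ i, φ (E i) = -E i)
    (hF : ∀ j, φ (F j) = F j + ∑ i, B i j • E i) :
    ∃ (r : ℕ), r ≤ m ∧ r ≤ k ∧
      ∃ (E' : Fin m → Fin n → ℤ) (F' : Fin k → Fin n → ℤ),
        Submodule.span ℤ (Set.range E' ∪ Set.range F') = ⊤ ∧
        (∀ i, φ (E' i) = -E' i) ∧
        (∀ j, φ (F' j) = F' j +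
          ∑ l : Fin m, (if (l : ℕ) = (j : ℕ) ∧ (l : ℕ) < r then (1:ℤ) else 0) • E' l) := by
  obtain ⟨U, Ui, V, Vi, r, hUUi, hUiU, hVVi, hViV, hrm, hrk, hent⟩ :=
    red_aux (m + k) m k le_rfl B
  set D : Matrix (Fin m) (Fin k) ℤ :=
    Matrix.of (fun i j => if (i : ℕ) = (j : ℕ) ∧ (i : ℕ) < r then (1:ℤ) else 0) with hD
  set X : Matrix (Fin m) (Fin k) ℤ :=
    Matrix.of (fun i j => ((U * B * V) i j - D i j) / 2) with hX
  have h2X : ∀ i j, (U * B * V) i j = D i j + 2 * X i j := by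
    intro i j
    have h1 := hent i j
    rw [hX, hD]
    simp only [Matrix.of_apply]
    by_cases hc : (i : ℕ) = (j : ℕ) ∧ (i : ℕ) < r
    · rw [if_pos hc] at h1 ⊢; omega
    · rw [if_neg hc] at h1 ⊢; omega
  set E' : Fin m → Fin n → ℤ := fun l => ∑ i, Ui i l • E i with hE'def
  have hE' : ∀ l, φ (E' l) = -E' l := by
    intro l
    show φ (∑ i, Ui i l • E i) = -(∑ i, Ui i l • E i)
    rw [map_sum, ← Finset.sum_neg_distrib]
    exact Finset.sum_congr rfl fun i _ => by
      rw [LinearMap.map_smul, hE, smul_neg]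
  have hEE' : ∀ i, E i = ∑ l, U l i • E' l := by
    intro i
    show E i = ∑ l, U l i • (∑ i', Ui i' l • E i')
    rw [combo Ui E (fun l => U l i)]
    exact (sum_delta (Ui * U) hUiU E i).symm
  set F' : Fin k → Fin n → ℤ :=
    fun j => (∑ j', V j' j • F j') + ∑ l, X l j • E' l with hF'def
  have key : ∀ j, ∑ j', V j' j • (∑ i, B i j' • E i) = ∑ l, (U * B * V) l j • E' l := by
    intro j
    rw [combo B E (fun j' => V j' j)]
    have h1 : ∀ i, (∑ j', B i j' * V j' j) • E i = (B * V) i j • E i := fun i => by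
      rw [← Matrix.mul_apply]
    simp_rw [h1, hEE']
    rw [combo U E' (fun i => (B * V) i j)]
    refine Finset.sum_congr rfl fun l _ => ?_
    congr 1
    rw [Matrix.mul_assoc, Matrix.mul_apply]
  have hF' : ∀ j, φ (F' j) = F' j + ∑ l, D l j • E' l := by
    intro j
    have hstep : φ (F' j) =
        ((∑ j', V j' j • F j') + (∑ j', V j' j • (∑ i, B i j' • E i)))
          + ∑ l, X l j • (-(E' l)) := by
      show φ ((∑ j', V j' j • F j') + ∑ l, X l j • E' l) = _
      rw [map_add, map_sum, map_sum]
      have e1 : ∀ j', φ (V j' j • F j') = V j' j • F j' + V j' j • (∑ i, B i j' • E i) := by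
        intro j'
        rw [LinearMap.map_smul, hF, smul_add]
      have e2 : ∀ l, φ (X l j • E' l) = X l j • (-(E' l)) := by
        intro l
        rw [LinearMap.map_smul, hE']
      simp_rw [e1, e2]
      rw [Finset.sum_add_distrib]
    rw [hstep, key]
    have hexp : ∀ l, (U * B * V) l j • E' l
        = D l j • E' l + (X l j • E' l + X l j • E' l) := by
      intro l
      rw [h2X l j, add_smul, two_mul, add_smul]
    rw [Finset.sum_congr rfl fun l _ => hexp l]
    show _ = ((∑ j', V j' j • F j') + ∑ l, X l j • E' l) + ∑ l, D l j • E' l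
    simp only [smul_neg, Finset.sum_add_distrib, Finset.sum_neg_distrib]
    abel
  refine ⟨r, hrm, hrk, E', F', ?_, hE', fun j => by simpa [hD] using hF' j⟩
  -- span
  rw [eq_top_iff, ← hspan, Submodule.span_le]
  rintro x (⟨i, rfl⟩ | ⟨j, rfl⟩)
  · rw [hEE' i]
    exact Submodule.sum_mem _ fun l _ =>
      Submodule.smul_mem _ _ (Submodule.subset_span (Or.inl ⟨l, rfl⟩))
  · have hFF' : F j = (∑ j', Vi j' j • F' j') - ∑ l, (X * Vi) l j • E' l := by
      have h1 : ∑ j', Vi j' j • F' j' =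
          ((∑ j'', (V * Vi) j'' j • F j'') + ∑ l, (X * Vi) l j • E' l) := by
        show (∑ j', Vi j' j • ((∑ j'', V j'' j' • F j'') + ∑ l, X l j' • E' l)) = _
        simp only [smul_add]
        rw [Finset.sum_add_distrib]
        congr 1
        · rw [combo V F (fun j' => Vi j' j)]
          exact Finset.sum_congr rfl fun j'' _ => by rw [Matrix.mul_apply]
        · rw [combo X E' (fun j' => Vi j' j)]
          exact Finset.sum_congr rfl fun l _ => by rw [Matrix.mul_apply]
      rw [h1, sum_delta (V * Vi) hVVi F j]
      abel
    rw [hFF']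
    refine Submodule.sub_mem _ ?_ ?_
    · exact Submodule.sum_mem _ fun j' _ =>
        Submodule.smul_mem _ _ (Submodule.subset_span (Or.inr ⟨j', rfl⟩))
    · exact Submodule.sum_mem _ fun l _ =>
        Submodule.smul_mem _ _ (Submodule.subset_span (Or.inl ⟨l, rfl⟩))
set_option maxHeartbeats 2000000 in
/-- **Classification of involutions in `GL_n(ℤ)` (existence of the normal form),
Lemma 1.5.** Every invertible integer matrix `A` with `A·A = 1` is conjugate in
`GL_n(ℤ)` to a block diagonal matrix `diag(I_{n₀}, −I_{n₁}, J, …, J)` with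
`n₀ + n₁ + 2·n₂ = n`. -/
theorem involution_conjugate_to_blockD (n : ℕ) (A : Matrix (Fin n) (Fin n) ℤ)
    (hA : IsUnit A) (h2 : A * A = 1) :
    ∃ n₀ n₁ n₂ : ℕ, n₀ + n₁ + 2 * n₂ = n ∧
      ∃ P : GL (Fin n) ℤ,
        (P : Matrix (Fin n) (Fin n) ℤ) * A * ((P⁻¹ : GL (Fin n) ℤ) : Matrix (Fin n) (Fin n) ℤ) =
          blockD n n₀ n₁ n₂ := by
  classical
  rcases Nat.eq_zero_or_pos n with hn | hn
  · subst hn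
    exact ⟨0, 0, 0, rfl, 1, by ext i j; exact i.elim0⟩
  haveI : Nonempty (Fin n) := ⟨⟨0, hn⟩⟩
  set φ : (Fin n → ℤ) →ₗ[ℤ] (Fin n → ℤ) := Matrix.toLin' A with hφdef
  have hφ : ∀ x, φ (φ x) = x := by
    intro x
    have h3 : φ.comp φ = LinearMap.id := by
      rw [hφdef, ← Matrix.toLin'_mul, h2, Matrix.toLin'_one]
    calc φ (φ x) = (φ.comp φ) x := rfl
    _ = x := by rw [h3]; rfl
  obtain ⟨m, k, hmk, E0, F0, B, hspan0, hE0, hF0⟩ := stepA n φ hφ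
  obtain ⟨r, hrm, hrk, E, F, hspan, hE, hFsum⟩ := stepB n m k φ E0 F0 B hspan0 hE0 hF0
  have hFlow : ∀ (j : Fin k) (h : (j : ℕ) < r),
      φ (F j) = F j + E ⟨(j : ℕ), lt_of_lt_of_le h hrm⟩ := by
    intro j h
    rw [hFsum j]
    congr 1
    rw [Finset.sum_eq_single (⟨(j : ℕ), lt_of_lt_of_le h hrm⟩ : Fin m)]
    · rw [if_pos ⟨rfl, h⟩, one_smul]
    · intro l _ hl
      rw [if_neg, zero_smul]
      rintro ⟨h1, _⟩
      exact hl (Fin.ext h1)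
    · intro hmem; exact absurd (Finset.mem_univ _) hmem
  have hFhigh : ∀ (j : Fin k), r ≤ (j : ℕ) → φ (F j) = F j := by
    intro j h
    rw [hFsum j]
    have hz : ∑ l : Fin m, (if (l : ℕ) = (j : ℕ) ∧ (l : ℕ) < r then (1:ℤ) else 0) • E l = 0 := by
      refine Finset.sum_eq_zero fun l _ => ?_
      rw [if_neg, zero_smul]
      rintro ⟨h1, h2'⟩; omega
    rw [hz, add_zero]
  set n₀ := k - r with hn₀
  set n₁ := m - r with hn₁
  have harith : n₀ + n₁ + 2 * r = n := by omega
  -- the new family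
  set c : Fin n → (Fin n → ℤ) := fun j =>
    if h0 : (j : ℕ) < n₀ then F ⟨r + (j : ℕ), by have := j.isLt; omega⟩
    else if h1 : (j : ℕ) < n₀ + n₁ then E ⟨r + ((j : ℕ) - n₀), by have := j.isLt; omega⟩
    else if ((j : ℕ) - (n₀ + n₁)) % 2 = 0 then
      F ⟨((j : ℕ) - (n₀ + n₁)) / 2, by have := j.isLt; omega⟩ +
        E ⟨((j : ℕ) - (n₀ + n₁)) / 2, by have := j.isLt; omega⟩
    else F ⟨((j : ℕ) - (n₀ + n₁)) / 2, by have := j.isLt; omega⟩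
    with hcdef
  have hcA : ∀ (j : Fin n) (h0 : (j : ℕ) < n₀),
      c j = F ⟨r + (j : ℕ), by have := j.isLt; omega⟩ := by
    intro j h0
    simp only [hcdef]
    rw [dif_pos h0]
  have hcB : ∀ (j : Fin n) (h0 : ¬(j : ℕ) < n₀) (h1 : (j : ℕ) < n₀ + n₁),
      c j = E ⟨r + ((j : ℕ) - n₀), by have := j.isLt; omega⟩ := by
    intro j h0 h1
    simp only [hcdef]
    rw [dif_neg h0, dif_pos h1]
  have hcC0 : ∀ (j : Fin n) (h0 : ¬(j : ℕ) < n₀) (h1 : ¬(j : ℕ) < n₀ + n₁)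
      (h2' : ((j : ℕ) - (n₀ + n₁)) % 2 = 0),
      c j = F ⟨((j : ℕ) - (n₀ + n₁)) / 2, by have := j.isLt; omega⟩ +
        E ⟨((j : ℕ) - (n₀ + n₁)) / 2, by have := j.isLt; omega⟩ := by
    intro j h0 h1 h2'
    simp only [hcdef]
    rw [dif_neg h0, dif_neg h1, if_pos h2']
  have hcC1 : ∀ (j : Fin n) (h0 : ¬(j : ℕ) < n₀) (h1 : ¬(j : ℕ) < n₀ + n₁)
      (h2' : ¬((j : ℕ) - (n₀ + n₁)) % 2 = 0),
      c j = F ⟨((j : ℕ) - (n₀ + n₁)) / 2, by have := j.isLt; omega⟩ := by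
    intro j h0 h1 h2'
    simp only [hcdef]
    rw [dif_neg h0, dif_neg h1, if_neg h2']
  -- span of c
  have hspanc : Submodule.span ℤ (Set.range c) = ⊤ := by
    rw [eq_top_iff, ← hspan, Submodule.span_le]
    rintro x (⟨i, rfl⟩ | ⟨j, rfl⟩)
    · by_cases hir : (i : ℕ) < r
      · -- E i = c (s + 2i) - c (s + 2i + 1)
        have hj0 : (n₀ + n₁) + 2 * (i : ℕ) < n := by omega
        have hj1 : (n₀ + n₁) + 2 * (i : ℕ) + 1 < n := by omega
        have hv0 := hcC0 ⟨(n₀ + n₁) + 2 * (i : ℕ), hj0⟩ (by first | (simp; omega) | simp | omega) (by first | (simp; omega) | simp | omega)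
          (by first | (simp; omega) | simp | omega)
        have hv1 := hcC1 ⟨(n₀ + n₁) + 2 * (i : ℕ) + 1, hj1⟩ (by first | (simp; omega) | simp | omega) (by first | (simp; omega) | simp | omega)
          (by first | (simp; omega) | simp | omega)
        have hEi : E i = c ⟨(n₀ + n₁) + 2 * (i : ℕ), hj0⟩ - c ⟨(n₀ + n₁) + 2 * (i : ℕ) + 1, hj1⟩ := by
          rw [hv0, hv1]
          have hFi : (⟨(((⟨(n₀ + n₁) + 2 * (i : ℕ), hj0⟩ : Fin n) : ℕ) - (n₀ + n₁)) / 2, by first | (simp; omega) | simp | omega⟩ : Fin k)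
              = ⟨(((⟨(n₀ + n₁) + 2 * (i : ℕ) + 1, hj1⟩ : Fin n) : ℕ) - (n₀ + n₁)) / 2, by first | (simp; omega) | simp | omega⟩ := by
            apply Fin.val_injective
            first | (simp; omega) | simp | omega
          rw [hFi]
          have hEi2 : (⟨(((⟨(n₀ + n₁) + 2 * (i : ℕ), hj0⟩ : Fin n) : ℕ) - (n₀ + n₁)) / 2, by first | (simp; omega) | simp | omega⟩ : Fin m) = i := by
            apply Fin.val_injective
            first | (simp; omega) | simp | omega
          rw [hEi2]
          abel
        rw [hEi]
        exact Submodule.sub_mem _ (Submodule.subset_span ⟨_, rfl⟩)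
          (Submodule.subset_span ⟨_, rfl⟩)
      · have hj0 : n₀ + ((i : ℕ) - r) < n := by omega
        have hv := hcB ⟨n₀ + ((i : ℕ) - r), hj0⟩ (by first | (simp; omega) | simp | omega) (by first | (simp; omega) | simp | omega)
        have hEi : E i = c ⟨n₀ + ((i : ℕ) - r), hj0⟩ := by
          rw [hv]
          refine congrArg _ (Fin.val_injective ?_)
          first | (simp; omega) | simp | omega
        rw [hEi]
        exact Submodule.subset_span ⟨_, rfl⟩
    · by_cases hjr : (j : ℕ) < r
      · have hj1 : (n₀ + n₁) + 2 * (j : ℕ) + 1 < n := by omega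
        have hv := hcC1 ⟨(n₀ + n₁) + 2 * (j : ℕ) + 1, hj1⟩ (by first | (simp; omega) | simp | omega) (by first | (simp; omega) | simp | omega)
          (by first | (simp; omega) | simp | omega)
        have hFj : F j = c ⟨(n₀ + n₁) + 2 * (j : ℕ) + 1, hj1⟩ := by
          rw [hv]
          refine congrArg _ (Fin.val_injective ?_)
          first | (simp; omega) | simp | omega
        rw [hFj]
        exact Submodule.subset_span ⟨_, rfl⟩
      · have hj0 : (j : ℕ) - r < n := by omega
        have hv := hcA ⟨(j : ℕ) - r, hj0⟩ (by first | (simp; omega) | simp | omega)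
        have hFj : F j = c ⟨(j : ℕ) - r, hj0⟩ := by
          rw [hv]
          refine congrArg _ (Fin.val_injective ?_)
          first | (simp; omega) | simp | omega
        rw [hFj]
        exact Submodule.subset_span ⟨_, rfl⟩
  -- paired action lemmas
  have hceven : ∀ (t : ℕ) (h : t < r),
      c ⟨(n₀ + n₁) + 2 * t, by omega⟩ = F ⟨t, by omega⟩ + E ⟨t, by omega⟩ := by
    intro t h
    rw [hcC0 ⟨(n₀ + n₁) + 2 * t, by omega⟩ (by simp only [Fin.val_mk]; omega)
      (by simp only [Fin.val_mk]; omega) (by simp only [Fin.val_mk]; omega)]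
    congr 1 <;> exact congrArg _ (Fin.val_injective (by simp only [Fin.val_mk]; omega))
  have hcodd : ∀ (t : ℕ) (h : t < r),
      c ⟨(n₀ + n₁) + 2 * t + 1, by omega⟩ = F ⟨t, by omega⟩ := by
    intro t h
    rw [hcC1 ⟨(n₀ + n₁) + 2 * t + 1, by omega⟩ (by simp only [Fin.val_mk]; omega)
      (by simp only [Fin.val_mk]; omega) (by simp only [Fin.val_mk]; omega)]
    exact congrArg _ (Fin.val_injective (by simp only [Fin.val_mk]; omega))
  have hphiceven : ∀ (t : ℕ) (h : t < r),
      φ (c ⟨(n₀ + n₁) + 2 * t, by omega⟩) = c ⟨(n₀ + n₁) + 2 * t + 1, by omega⟩ := by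
    intro t h
    rw [hceven t h, hcodd t h, map_add, hE,
      hFlow ⟨t, by omega⟩ (by simp only [Fin.val_mk]; omega)]
    abel
  have hphicodd : ∀ (t : ℕ) (h : t < r),
      φ (c ⟨(n₀ + n₁) + 2 * t + 1, by omega⟩) = c ⟨(n₀ + n₁) + 2 * t, by omega⟩ := by
    intro t h
    rw [hcodd t h, hceven t h,
      hFlow ⟨t, by omega⟩ (by simp only [Fin.val_mk]; omega)]
  -- build the basis
  set e := Pi.basisFun ℤ (Fin n) with hedef
  set g : (Fin n → ℤ) →ₗ[ℤ] (Fin n → ℤ) := e.constr ℤ c with hgdef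
  have hgsurj : Function.Surjective g := by
    rw [← LinearMap.range_eq_top, hgdef, Module.Basis.constr_range, hspanc]
  have hginj : Function.Injective g :=
    OrzechProperty.injective_of_surjective_endomorphism g hgsurj
  set geq : (Fin n → ℤ) ≃ₗ[ℤ] (Fin n → ℤ) :=
    LinearEquiv.ofBijective g ⟨hginj, hgsurj⟩ with hgeq
  set cb : Module.Basis (Fin n) ℤ (Fin n → ℤ) := e.map geq with hcb
  have hcbj : ∀ j, cb j = c j := by
    intro j
    rw [hcb, Module.Basis.map_apply]
    show g (e j) = c j
    rw [hgdef]
    exact e.constr_basis ℤ c j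
  have hrepr : ∀ (j' i : Fin n), cb.repr (cb j') i = if (j' : ℕ) = (i : ℕ) then 1 else 0 := by
    intro j' i
    rw [Module.Basis.repr_self, Finsupp.single_apply]
    exact if_congr (by rw [Fin.ext_iff]) rfl rfl
  clear_value cb geq g
  have hM : LinearMap.toMatrix cb cb φ = blockD n n₀ n₁ r := by
    ext i j
    rw [LinearMap.toMatrix_apply]
    by_cases h0 : (j : ℕ) < n₀
    · have h1 : φ (cb j) = cb j := by
        rw [hcbj j, hcA j h0, hFhigh _ (by simp only [Fin.val_mk]; omega), ← hcA j h0, ← hcbj j]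
      rw [h1, hrepr]
      simp only [blockD, Matrix.of_apply]
      split_ifs <;> omega
    · by_cases h1 : (j : ℕ) < n₀ + n₁
      · have hb : φ (cb j) = -(cb j) := by
          rw [hcbj j, hcB j h0 h1, hE, ← hcB j h0 h1, ← hcbj j]
        rw [hb, map_neg]
        have hneg : (-(cb.repr (cb j))) i = -(cb.repr (cb j) i) := rfl
        rw [hneg, hrepr]
        simp only [blockD, Matrix.of_apply]
        split_ifs <;> omega
      · by_cases h2' : ((j : ℕ) - (n₀ + n₁)) % 2 = 0
        · obtain ⟨t, ht⟩ : ∃ t, (j : ℕ) = (n₀ + n₁) + 2 * t :=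
            ⟨((j : ℕ) - (n₀ + n₁)) / 2, by omega⟩
          have htr : t < r := by omega
          have hj : j = ⟨(n₀ + n₁) + 2 * t, by omega⟩ :=
            Fin.val_injective (by simp only [Fin.val_mk]; omega)
          have hcbeq : cb j = cb ⟨(n₀ + n₁) + 2 * t, by omega⟩ := congrArg cb hj
          have hstep : φ (cb j) = cb ⟨(n₀ + n₁) + 2 * t + 1, by omega⟩ := by
            rw [hcbeq, hcbj, hcbj]
            exact hphiceven t htr
          rw [hstep, hrepr]
          simp only [blockD, Matrix.of_apply, Fin.val_mk]
          split_ifs <;> omega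
        · obtain ⟨t, ht⟩ : ∃ t, (j : ℕ) = (n₀ + n₁) + 2 * t + 1 :=
            ⟨((j : ℕ) - (n₀ + n₁)) / 2, by omega⟩
          have htr : t < r := by omega
          have hj : j = ⟨(n₀ + n₁) + 2 * t + 1, by omega⟩ :=
            Fin.val_injective (by simp only [Fin.val_mk]; omega)
          have hcbeq : cb j = cb ⟨(n₀ + n₁) + 2 * t + 1, by omega⟩ := congrArg cb hj
          have hstep : φ (cb j) = cb ⟨(n₀ + n₁) + 2 * t, by omega⟩ := by
            rw [hcbeq, hcbj, hcbj]
            exact hphicodd t htr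
          rw [hstep, hrepr]
          simp only [blockD, Matrix.of_apply, Fin.val_mk]
          split_ifs <;> omega
  -- conjugation
  set P : Matrix (Fin n) (Fin n) ℤ := LinearMap.toMatrix e cb LinearMap.id with hPdef
  set Q : Matrix (Fin n) (Fin n) ℤ := LinearMap.toMatrix cb e LinearMap.id with hQdef
  have hPQ : P * Q = 1 := by
    rw [hPdef, hQdef, ← LinearMap.toMatrix_comp cb e cb LinearMap.id LinearMap.id,
      LinearMap.id_comp, LinearMap.toMatrix_id]
  have hQP : Q * P = 1 := by
    rw [hPdef, hQdef, ← LinearMap.toMatrix_comp e cb e LinearMap.id LinearMap.id,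
      LinearMap.id_comp, LinearMap.toMatrix_id]
  have hAe : LinearMap.toMatrix e e φ = A := by
    rw [hedef, LinearMap.toMatrix_eq_toMatrix', hφdef, LinearMap.toMatrix'_toLin']
  have hconj : LinearMap.toMatrix cb cb φ = P * (A * Q) := by
    calc LinearMap.toMatrix cb cb φ
        = LinearMap.toMatrix cb cb (LinearMap.id.comp (φ.comp LinearMap.id)) := by
          rw [LinearMap.id_comp, LinearMap.comp_id]
      _ = P * LinearMap.toMatrix cb e (φ.comp LinearMap.id) := by
          rw [LinearMap.toMatrix_comp cb e cb, hPdef]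
      _ = P * (LinearMap.toMatrix e e φ * Q) := by
          rw [LinearMap.toMatrix_comp cb e e, hQdef]
      _ = P * (A * Q) := by rw [hAe]
  refine ⟨n₀, n₁, r, by omega, ⟨P, Q, hPQ, hQP⟩, ?_⟩
  show P * A * Q = blockD n n₀ n₁ r
  rw [Matrix.mul_assoc, ← hconj, hM]
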